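/- Let η ∈ [2/λ₁, 0.1]. Let θ = (α, 0, β₂) ∈ ℝ³ satisfy 1/√(λ₁η) ≤ α ≤ √(2/(λ₁η)) and 0 < αβ₂ < 1. Then the vector (0,1,0) is an eigenvector of H(θ) with eigenvalue λ₁α², this eigenvalue is the largest eigenvalue of H(θ) (so S(θ) = λ₁α² ≤ 2/η), and the gradient ∇L(θ) is orthogonal to (0,1,0). -/

import Mathlib

noncomputable section

open Matrix

/-- Clip(x, c) = sign(x) * max {|x|, c}. -/
def Clip (x c : ℝ) : ℝ := Real.sign x * max |x| c

/-- Hessian of the loss at θ = (a, b1, b2). -/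
def Hmat (l1 l2 a b1 b2 : ℝ) : Matrix (Fin 3) (Fin 3) ℝ :=
  !![l1 * b1 ^ 2 + l2 * b2 ^ 2, 2 * l1 * a * b1, 2 * l2 * a * b2 - l2;
     2 * l1 * a * b1, l1 * a ^ 2, 0;
     2 * l2 * a * b2 - l2, 0, l2 * a ^ 2]

/-- Sharpness: the largest eigenvalue of a (symmetric) 3×3 real matrix. -/
def sharpness (M : Matrix (Fin 3) (Fin 3) ℝ) : ℝ :=
  sSup {mu : ℝ | ∃ v : Fin 3 → ℝ, v ≠ 0 ∧ M.mulVec v = mu • v}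

/-- The loss L(a, b1, b2). -/
def Loss (l1 l2 a b1 b2 : ℝ) : ℝ :=
  (1 / 2) * l1 * (a * b1) ^ 2 + (1 / 2) * l2 * (a * b2 - 1) ^ 2

/-- Membership in the initialization set X(η). -/
def InInit (l1 l2 eta a b1 b2 : ℝ) : Prop :=
  Real.sqrt (1.1 / (l1 * eta)) ≤ a ∧ a ≤ Real.sqrt (2 / (l1 * eta)) ∧
  max (max (Real.sqrt (6 * eta * l1) / 20) (3 / (20 * a))) a ≤ b2 ∧ b2 < 1 / a ∧
  (l2 * b2 / (500 * l1 * a)) * (1 - a * b2) ≤ b1 ^ 2 ∧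
  b1 ^ 2 ≤ (l2 * b2 / (l1 * a)) * (1 - a * b2)

/-- The clipped gradient descent trajectory equations. -/
def IsTraj (l1 l2 eta : ℝ) (a b1 b2 : ℕ → ℝ) : Prop :=
  ∀ t : ℕ,
    a (t + 1) = a t - eta * (l1 * (b1 t) ^ 2 * a t - l2 * b2 t * (1 - a t * b2 t)) ∧
    b1 (t + 1) = Clip ((1 - eta * l1 * (a t) ^ 2) * b1 t)
      (Real.sqrt 10 / (6 * Real.sqrt l1)) ∧
    b2 (t + 1) = b2 t + eta * l2 * a t * (1 - a t * b2 t)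

/-- The projected (constrained) trajectory equations. -/
def IsProjTraj (l1 l2 eta : ℝ) (a b : ℕ → ℝ) : Prop :=
  ∀ t : ℕ,
    a (t + 1) = Clip (a t + eta * l2 * b t * (1 - a t * b t))
      (Real.sqrt (2 / (eta * l1))) ∧
    b (t + 1) = b t + eta * l2 * a t * (1 - a t * b t)


lemma stable_aux_eig (l1 l2 a b2 : ℝ) :
    (Hmat l1 l2 a 0 b2).mulVec ![0, 1, 0] = (l1 * a ^ 2) • ![0, 1, 0] := by
  funext i
  fin_cases i <;>
    simp [Hmat, Matrix.mulVec, dotProduct, Fin.sum_univ_three]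

lemma stable_aux_bound (l1 l2 a b2 : ℝ)
    (hlb2 : l2 * b2 ^ 2 ≤ 1 / 10) (hla2 : l2 * a ^ 2 ≤ 1 / 100)
    (hl2small : l2 ≤ 1 / 100)
    (hc1 : 2 * l2 * a * b2 - l2 ≤ l2) (hc2 : -l2 ≤ 2 * l2 * a * b2 - l2)
    (hLa10 : 10 ≤ l1 * a ^ 2) :
    ∀ mu ∈ {mu : ℝ | ∃ v : Fin 3 → ℝ, v ≠ 0 ∧
      (Hmat l1 l2 a 0 b2).mulVec v = mu • v}, mu ≤ l1 * a ^ 2 := by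
  rintro mu ⟨v, hv0, hv⟩
  have e0 := congrFun hv 0
  have e1 := congrFun hv 1
  have e2 := congrFun hv 2
  simp [Hmat, Matrix.mulVec, dotProduct, Fin.sum_univ_three] at e0 e1 e2
  rcases e1 with e1 | e1
  · linarith [e1.ge, e1.le]
  · have hvpos : 0 < v 0 ^ 2 + v 2 ^ 2 := by
      by_contra hcon
      push_neg at hcon
      have h02 : v 0 ^ 2 = 0 := by nlinarith [sq_nonneg (v 0), sq_nonneg (v 2)]
      have h22 : v 2 ^ 2 = 0 := by nlinarith [sq_nonneg (v 0), sq_nonneg (v 2)]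
      have h0 : v 0 = 0 := pow_eq_zero_iff (two_ne_zero) |>.mp h02
      have h2 : v 2 = 0 := pow_eq_zero_iff (two_ne_zero) |>.mp h22
      apply hv0
      funext i
      fin_cases i
      · exact h0
      · exact e1
      · exact h2
    have hA : mu * (v 0 ^ 2 + v 2 ^ 2) = l2 * b2 ^ 2 * v 0 ^ 2
        + 2 * ((2 * l2 * a * b2 - l2) * (v 0 * v 2)) + l2 * a ^ 2 * v 2 ^ 2 := by
      linear_combination (-(v 0)) * e0 + (-(v 2)) * e2
    have hB : 2 * ((2 * l2 * a * b2 - l2) * (v 0 * v 2)) ≤ l2 * (v 0 ^ 2 + v 2 ^ 2) := by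
      have t1 := mul_le_mul_of_nonneg_right hc1 (sq_nonneg (v 0 + v 2))
      have t2 := mul_le_mul_of_nonneg_right hc2 (sq_nonneg (v 0 - v 2))
      nlinarith [t1, t2]
    have hC := mul_le_mul_of_nonneg_right hlb2 (sq_nonneg (v 0))
    have hD := mul_le_mul_of_nonneg_right hla2 (sq_nonneg (v 2))
    have hE := mul_le_mul_of_nonneg_right hl2small (le_of_lt hvpos)
    have hF := mul_le_mul_of_nonneg_right hLa10 (le_of_lt hvpos)
    have key : mu * (v 0 ^ 2 + v 2 ^ 2) ≤ (l1 * a ^ 2) * (v 0 ^ 2 + v 2 ^ 2) := by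
      nlinarith [hA, hB, hC, hD, hE, hF]
    exact le_of_mul_le_mul_right key hvpos

theorem stable_set_properties (l1 l2 eta a b2 : ℝ)
    (hl1 : 100 ≤ l1) (hl2 : 0 < l2) (hl : l1 * l2 ≤ 1)
    (heta1 : 2 / l1 ≤ eta) (heta2 : eta ≤ 0.1)
    (ha1 : 1 / Real.sqrt (l1 * eta) ≤ a) (ha2 : a ≤ Real.sqrt (2 / (l1 * eta)))
    (hb1 : 0 < a * b2) (hb2 : a * b2 < 1) :
    (Hmat l1 l2 a 0 b2).mulVec ![0, 1, 0] = (l1 * a ^ 2) • ![0, 1, 0] ∧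
    sharpness (Hmat l1 l2 a 0 b2) = l1 * a ^ 2 ∧
    l1 * a ^ 2 ≤ 2 / eta ∧
    dotProduct
      ![l1 * a * 0 ^ 2 + l2 * b2 * (a * b2 - 1), l1 * a ^ 2 * 0,
        l2 * a * (a * b2 - 1)] ![0, 1, 0] = 0 := by
  have hl1p : (0:ℝ) < l1 := by linarith
  have heta0 : 0 < eta := lt_of_lt_of_le (by positivity) heta1
  have hle : (2:ℝ) ≤ l1 * eta := by
    have := (div_le_iff₀ hl1p).mp heta1; linarith [this]
  have hlep : (0:ℝ) < l1 * eta := by linarith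
  have ha0 : 0 < a := lt_of_lt_of_le (by positivity) ha1
  have hsq1 : 1 ≤ l1 * eta * a ^ 2 := by
    have h1 : (1 / Real.sqrt (l1 * eta)) ^ 2 ≤ a ^ 2 :=
      pow_le_pow_left₀ (by positivity) ha1 2
    rw [div_pow, one_pow, Real.sq_sqrt hlep.le] at h1
    linarith [(div_le_iff₀ hlep).mp h1]
  have hsq2 : l1 * eta * a ^ 2 ≤ 2 := by
    have h1 : a ^ 2 ≤ (Real.sqrt (2 / (l1 * eta))) ^ 2 :=
      pow_le_pow_left₀ ha0.le ha2 2
    rw [Real.sq_sqrt (by positivity)] at h1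
    calc l1 * eta * a ^ 2 ≤ l1 * eta * (2 / (l1 * eta)) := by
          exact mul_le_mul_of_nonneg_left h1 hlep.le
      _ = 2 := by field_simp
  have hLa10 : 10 ≤ l1 * a ^ 2 := by
    nlinarith [mul_le_mul_of_nonneg_right heta2 (by positivity : (0:ℝ) ≤ l1 * a ^ 2)]
  have hLa2 : l1 * a ^ 2 ≤ 2 / eta := by
    rw [le_div_iff₀ heta0]; nlinarith
  have ha2le1 : a ^ 2 ≤ 1 := by nlinarith
  have hl2small : l2 ≤ 1 / 100 := by nlinarith
  have hlb2 : l2 * b2 ^ 2 ≤ 1 / 10 := by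
    have h1 : a ^ 2 * b2 ^ 2 ≤ 1 := by nlinarith
    have h2 : l2 * b2 ^ 2 ≤ l1 * eta * a ^ 2 * (l2 * b2 ^ 2) := by
      nlinarith [mul_nonneg hl2.le (sq_nonneg b2)]
    have h3 : l1 * eta * l2 * (a ^ 2 * b2 ^ 2) ≤ l1 * eta * l2 * 1 :=
      mul_le_mul_of_nonneg_left h1 (by positivity)
    nlinarith [mul_le_mul_of_nonneg_right heta2 hl2.le]
  have hla2 : l2 * a ^ 2 ≤ 1 / 100 := by
    have := mul_le_mul_of_nonneg_left ha2le1 hl2.le; linarith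
  have hc1 : 2 * l2 * a * b2 - l2 ≤ l2 := by
    have := mul_lt_mul_of_pos_left hb2 hl2; linarith
  have hc2 : -l2 ≤ 2 * l2 * a * b2 - l2 := by
    have := mul_pos hl2 hb1; linarith
  have heig := stable_aux_eig l1 l2 a b2
  have hbound := stable_aux_bound l1 l2 a b2 hlb2 hla2 hl2small hc1 hc2 hLa10
  refine ⟨heig, ?_, hLa2, by simp [dotProduct, Fin.sum_univ_three]⟩
  apply le_antisymm
  · exact csSup_le ⟨l1 * a ^ 2, ![0, 1, 0], by simp [Function.ne_iff], heig⟩ hbound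
  · exact le_csSup ⟨l1 * a ^ 2, hbound⟩ ⟨![0, 1, 0], by simp [Function.ne_iff], heig⟩
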